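/- Let G be a δ-hyperbolic group with Gromov boundary ∂G and let Q : 𝒟 → ∂G be the canonical surjection from the space of DSGs. For every finite open cover (U_i)_{i=1}^n of ∂G there exists l ∈ ℕ such that for all m, m' ∈ 𝒟, if d_S(c_m^{1}(i), c_{m'}^{1}(i)) ≤ 2δ for every i ≤ l, then there is i ≤ n with Q(m), Q(m') ∈ U_i. -/

import Mathlib

/-- The word metric on a group `G` with respect to a generating set `S`. -/
noncomputable def wordDist {G : Type*} [Group G] (S : Set G) (g h : G) : ℕ :=
  sInf {n | ∃ l : List G, (∀ x ∈ l, x ∈ S) ∧ l.length = n ∧ g = h * l.prod}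

/-- `S` is a finite symmetric generating set of `G`. -/
def IsFinSymmGenSet {G : Type*} [Group G] (S : Set G) : Prop :=
  S.Finite ∧ (∀ s ∈ S, s⁻¹ ∈ S) ∧ Subgroup.closure S = ⊤

/-- A discrete geodesic segment from `g` to `h` with respect to the integer-valued
metric `d`, parametrized on `[0, d g h]`. -/
def IsGeodesicSeg {G : Type*} (d : G → G → ℕ) (c : ℕ → G) (g h : G) : Prop :=
  c 0 = g ∧ c (d g h) = h ∧
    ∀ i j : ℕ, i ≤ d g h → j ≤ d g h → d (c i) (c j) = Nat.dist i j

/-- A discrete geodesic ray: an isometric embedding `c : ℕ → G`. -/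
def IsGeodesicRay {G : Type*} (d : G → G → ℕ) (c : ℕ → G) : Prop :=
  ∀ i j : ℕ, d (c i) (c j) = Nat.dist i j

/-- Two rays are asymptotic if their images are at finite Hausdorff distance. -/
def Asymptotic {G : Type*} (d : G → G → ℕ) (c c' : ℕ → G) : Prop :=
  ∃ K : ℕ, (∀ t : ℕ, ∃ s : ℕ, d (c t) (c' s) ≤ K) ∧ (∀ s : ℕ, ∃ t : ℕ, d (c' s) (c t) ≤ K)

/-- Rips δ-hyperbolicity of the integer-valued metric `d`: each side of any discrete
geodesic triangle is contained in the δ-neighborhood of the union of the other two sides. -/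
def DiscHyperbolic {G : Type*} (d : G → G → ℕ) (δ : ℕ) : Prop :=
  ∀ x y z : G, ∀ cxy cyz czx : ℕ → G,
    IsGeodesicSeg d cxy x y → IsGeodesicSeg d cyz y z → IsGeodesicSeg d czx z x →
    ∀ i ≤ d x y, ∃ p ∈ cyz '' Set.Iic (d y z) ∪ czx '' Set.Iic (d z x), d (cxy i) p ≤ δ

/-- The ray determined by a map `m : G → G` starting at `g`:
each step multiplies by the value of `m` at the current position. -/
def dsgRay {G : Type*} [Group G] (m : G → G) (g : G) : ℕ → G
  | 0 => g
  | n + 1 => dsgRay m g n * m (dsgRay m g n)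

/-- A directed system of geodesics (DSG): a map `m : G → S` all of whose rays are
geodesic rays, any two of which are asymptotic. -/
def IsDSG {G : Type*} [Group G] (d : G → G → ℕ) (S : Set G) (m : G → G) : Prop :=
  (∀ g : G, m g ∈ S) ∧ (∀ g : G, IsGeodesicRay d (dsgRay m g)) ∧
    ∀ g h : G, Asymptotic d (dsgRay m g) (dsgRay m h)

/-- The space of DSGs on `G`. -/
def DSGs {G : Type*} [Group G] (d : G → G → ℕ) (S : Set G) := {m : G → G // IsDSG d S m}

/-- The space of geodesic rays in `G`. -/
def GeodesicRays {G : Type*} (d : G → G → ℕ) := {c : ℕ → G // IsGeodesicRay d c}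

/-- The Gromov boundary of `G`, as the quotient of the space of geodesic rays by the
relation of being asymptotic (finite Hausdorff distance). -/
def GromovBoundary {G : Type*} (d : G → G → ℕ) :=
  Quot (fun c c' : GeodesicRays d => Asymptotic d c.1 c'.1)

/-- The topology on geodesic rays: uniform convergence on bounded sets, which for the
discrete group `G` is the product (pointwise convergence) topology. -/
def raysTop {G : Type*} (d : G → G → ℕ) : TopologicalSpace (GeodesicRays d) :=
  TopologicalSpace.induced (fun c => (c.1 : ℕ → G))
    (@Pi.topologicalSpace ℕ (fun _ => G) (fun _ => ⊥))

/-- The quotient topology on the Gromov boundary. -/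
def boundaryTop {G : Type*} (d : G → G → ℕ) : TopologicalSpace (GromovBoundary d) :=
  (raysTop d).coinduced (Quot.mk _)

/-- The canonical surjection `Q : 𝒟 → ∂G` sending a DSG to the class of its ray at `1`. -/
def Qmap {G : Type*} [Group G] (d : G → G → ℕ) (S : Set G) (m : DSGs d S) :
    GromovBoundary d :=
  Quot.mk _ ⟨dsgRay m.1 1, m.2.2.1 1⟩

/-- The topology `τ` on the space of DSGs, generated by the neighborhoods `𝒩_m^{l,D}`. -/
def dsgTop {G : Type*} [Group G] (d : G → G → ℕ) (S : Set G) (δ : ℕ) :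
    TopologicalSpace (DSGs d S) :=
  TopologicalSpace.generateFrom
    {U | ∃ (m : DSGs d S) (l D : ℕ), 8 * δ < l ∧ 2 * δ ≤ D ∧
      U = {m' : DSGs d S | ∀ i ≤ l, d (dsgRay m.1 1 i) (dsgRay m'.1 1 i) ≤ D}}

/-- The word metric is left-invariant. -/
theorem wordDist_mul_left {G : Type*} [Group G] (S : Set G) (a g h : G) :
    wordDist S (a * g) (a * h) = wordDist S g h := by
  unfold wordDist
  congr 1
  ext n
  constructor
  · rintro ⟨l, h1, h2, h3⟩
    exact ⟨l, h1, h2, by rw [mul_assoc] at h3; exact mul_left_cancel h3⟩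
  · rintro ⟨l, h1, h2, h3⟩
    exact ⟨l, h1, h2, by rw [mul_assoc, ← h3]⟩

/-- The canonical action of `G` on its Gromov boundary, induced by left translation
of geodesic rays. -/
def boundaryAct {G : Type*} [Group G] (S : Set G) (g : G) :
    GromovBoundary (wordDist S) → GromovBoundary (wordDist S) :=
  Quot.map
    (fun c => ⟨fun t => g * c.1 t, fun i j => by
      rw [wordDist_mul_left]; exact c.2 i j⟩)
    (by
      rintro c c' ⟨K, h1, h2⟩
      refine ⟨K, fun t => ?_, fun s => ?_⟩
      · obtain ⟨s, hs⟩ := h1 t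
        exact ⟨s, by simpa [wordDist_mul_left] using hs⟩
      · obtain ⟨t, ht⟩ := h2 s
        exact ⟨t, by simpa [wordDist_mul_left] using ht⟩)

section Aux

private lemma wd_symm {G : Type*} [Group G] {S : Set G} (hsym : ∀ s ∈ S, s⁻¹ ∈ S)
    (g h : G) : wordDist S g h = wordDist S h g := by
  have key : ∀ g h : G,
      {n | ∃ l : List G, (∀ x ∈ l, x ∈ S) ∧ l.length = n ∧ g = h * l.prod} ⊆
      {n | ∃ l : List G, (∀ x ∈ l, x ∈ S) ∧ l.length = n ∧ h = g * l.prod} := by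
    rintro g h n ⟨l, hl, hlen, hprod⟩
    refine ⟨(l.map fun x => x⁻¹).reverse, ?_, by simp [hlen], ?_⟩
    · intro x hx
      simp only [List.mem_reverse, List.mem_map] at hx
      obtain ⟨y, hy, rfl⟩ := hx
      exact hsym y (hl y hy)
    · rw [← List.prod_inv_reverse, hprod]
      group
  unfold wordDist
  congr 1
  exact Set.Subset.antisymm (key g h) (key h g)

private lemma exists_word {G : Type*} [Group G] {S : Set G} (hS : IsFinSymmGenSet S) (g : G) :
    ∃ l : List G, (∀ x ∈ l, x ∈ S) ∧ g = 1 * l.prod := by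
  have hg : g ∈ (Subgroup.closure S).toSubmonoid := by rw [hS.2.2]; trivial
  rw [Subgroup.closure_toSubmonoid] at hg
  obtain ⟨l, hl, hprod⟩ := Submonoid.exists_list_of_mem_closure hg
  refine ⟨l, fun x hx => ?_, by rw [one_mul, hprod]⟩
  rcases hl x hx with h | h
  · exact h
  · simpa using hS.2.1 _ (Set.mem_inv.mp h)

private lemma prodSet_finite {G : Type*} [Group G] {S : Set G} (hfin : S.Finite) :
    ∀ n : ℕ, {g : G | ∃ l : List G, (∀ x ∈ l, x ∈ S) ∧ l.length = n ∧ g = l.prod}.Finite := by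
  intro n
  induction n with
  | zero =>
    apply Set.Finite.subset (Set.finite_singleton (1 : G))
    rintro g ⟨l, _, hlen, rfl⟩
    simp [List.length_eq_zero_iff.mp hlen]
  | succ n ih =>
    apply Set.Finite.subset (Set.Finite.image2 (· * ·) hfin ih)
    rintro g ⟨l, hl, hlen, rfl⟩
    obtain ⟨a, t, rfl⟩ := List.exists_of_length_succ l hlen
    exact ⟨a, hl a List.mem_cons_self, t.prod,
      ⟨t, fun x hx => hl x (List.mem_cons_of_mem a hx), by simpa using hlen, rfl⟩,
      by simp⟩

end Aux

/-- Lebesgue number lemma for `∂G`: for every finite open cover of the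
boundary there is `l` such that DSGs whose base rays `2δ`-fellow travel up to time `l`
are mapped by `Q` into a common element of the cover. -/
theorem boundary_Lebesgue {G : Type*} [Group G] (S : Set G)
    (hS : IsFinSymmGenSet S) (δ : ℕ) (hhyp : DiscHyperbolic (wordDist S) δ)
    (n : ℕ) (U : Fin n → Set (GromovBoundary (wordDist S)))
    (hopen : ∀ i, @IsOpen _ (boundaryTop (wordDist S)) (U i))
    (hcover : (⋃ i, U i) = Set.univ) :
    ∃ l : ℕ, ∀ m m' : DSGs (wordDist S) S,
      (∀ i ≤ l, wordDist S (dsgRay m.1 1 i) (dsgRay m'.1 1 i) ≤ 2 * δ) →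
      ∃ i : Fin n, Qmap (wordDist S) S m ∈ U i ∧ Qmap (wordDist S) S m' ∈ U i := by
    classical
  letI : TopologicalSpace G := ⊥
  haveI : DiscreteTopology G := ⟨rfl⟩
  letI tR : TopologicalSpace (GeodesicRays (wordDist S)) := raysTop (wordDist S)
  letI tB : TopologicalSpace (GromovBoundary (wordDist S)) := boundaryTop (wordDist S)
  have hInd : Topology.IsInducing (fun c : GeodesicRays (wordDist S) => (c.1 : ℕ → G)) := ⟨rfl⟩
  have hval : Continuous (fun c : GeodesicRays (wordDist S) => (c.1 : ℕ → G)) :=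
    continuous_induced_dom
  -- the set of geodesic rays from 1, as a subset of the product space, is compact
  have hKP : {c : ℕ → G | IsGeodesicRay (wordDist S) c ∧ c 0 = 1} ⊆
      Set.pi Set.univ
        (fun i => {g : G | ∃ l : List G, (∀ x ∈ l, x ∈ S) ∧ l.length = i ∧ g = l.prod}) := by
    rintro c ⟨hray, h0⟩ i -
    have hne : {n | ∃ l : List G, (∀ x ∈ l, x ∈ S) ∧ l.length = n ∧ c i = 1 * l.prod}.Nonempty := by
      obtain ⟨l, hl, hp⟩ := exists_word hS (c i)
      exact ⟨l.length, l, hl, rfl, hp⟩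
    have hvi : wordDist S (c i) 1 = i := by
      have := hray i 0
      rwa [h0, Nat.dist_zero_right] at this
    have hmem : wordDist S (c i) 1 ∈
        {n | ∃ l : List G, (∀ x ∈ l, x ∈ S) ∧ l.length = n ∧ c i = 1 * l.prod} :=
      Nat.sInf_mem hne
    rw [hvi] at hmem
    obtain ⟨l, hl, hlen, hp⟩ := hmem
    exact ⟨l, hl, hlen, by rw [hp, one_mul]⟩
  have hKc : IsCompact {c : ℕ → G | IsGeodesicRay (wordDist S) c ∧ c 0 = 1} := by
    have hpi : IsCompact (Set.pi Set.univ
        (fun i => {g : G | ∃ l : List G, (∀ x ∈ l, x ∈ S) ∧ l.length = i ∧ g = l.prod})) :=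
      isCompact_univ_pi fun i => (prodSet_finite hS.1 i).isCompact
    refine hpi.of_isClosed_subset ?_ hKP
    have hKeq : {c : ℕ → G | IsGeodesicRay (wordDist S) c ∧ c 0 = 1} =
        (⋂ i, ⋂ j, {c : ℕ → G | wordDist S (c i) (c j) = Nat.dist i j}) ∩
          {c : ℕ → G | c 0 = 1} := by
      ext c
      simp only [Set.mem_setOf_eq, Set.mem_inter_iff, Set.mem_iInter, IsGeodesicRay]
    rw [hKeq]
    refine IsClosed.inter (isClosed_iInter fun i => isClosed_iInter fun j => ?_) ?_
    · show IsClosed ((fun c : ℕ → G => (c i, c j)) ⁻¹'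
        {p : G × G | wordDist S p.1 p.2 = Nat.dist i j})
      exact IsClosed.preimage ((continuous_apply i).prodMk (continuous_apply j))
        (isClosed_discrete _)
    · show IsClosed ((fun c : ℕ → G => c 0) ⁻¹' ({1} : Set G))
      exact IsClosed.preimage (continuous_apply 0) (isClosed_discrete _)
  -- hence the set A of geodesic rays from 1 is compact
  have hA : IsCompact {c : GeodesicRays (wordDist S) | c.1 0 = 1} := by
    rw [hInd.isCompact_iff]
    have him : (fun c : GeodesicRays (wordDist S) => (c.1 : ℕ → G)) ''
        {c : GeodesicRays (wordDist S) | c.1 0 = 1} =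
        {c : ℕ → G | IsGeodesicRay (wordDist S) c ∧ c 0 = 1} := by
      ext c
      constructor
      · rintro ⟨⟨c, hc⟩, h0, rfl⟩
        exact ⟨hc, h0⟩
      · rintro ⟨hray, h0⟩
        exact ⟨⟨c, hray⟩, h0, rfl⟩
    rwa [him]
  -- the quotient map is continuous
  set q : GeodesicRays (wordDist S) → GromovBoundary (wordDist S) :=
    Quot.mk (fun c c' : GeodesicRays (wordDist S) => Asymptotic (wordDist S) c.1 c'.1) with hqdef
  have hq : Continuous q := continuous_coinduced_rng
  set V : Fin n → Set (GeodesicRays (wordDist S)) := fun i => q ⁻¹' U i with hVdef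
  have hV : ∀ i, IsOpen (V i) := fun i => (hopen i).preimage hq
  set W : Set (GeodesicRays (wordDist S) × GeodesicRays (wordDist S)) :=
    ⋃ i, (V i) ×ˢ (V i) with hWdef
  have hW : IsOpen W := isOpen_iUnion fun i => (hV i).prod (hV i)
  set E : ℕ → Set (GeodesicRays (wordDist S) × GeodesicRays (wordDist S)) :=
    fun l => {p | ∀ i ≤ l, wordDist S (p.1.1 i) (p.2.1 i) ≤ 2 * δ} with hEdef
  have hE : ∀ l, IsClosed (E l) := by
    intro l
    have : E l = ⋂ i, ⋂ (_ : i ≤ l),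
        {p : GeodesicRays (wordDist S) × GeodesicRays (wordDist S) |
          wordDist S (p.1.1 i) (p.2.1 i) ≤ 2 * δ} := by
      ext p
      simp [hEdef]
    rw [this]
    refine isClosed_iInter fun i => isClosed_iInter fun _ => ?_
    show IsClosed ((fun p : GeodesicRays (wordDist S) × GeodesicRays (wordDist S) =>
        ((p.1.1 i : G), (p.2.1 i : G))) ⁻¹' {p : G × G | wordDist S p.1 p.2 ≤ 2 * δ})
    exact IsClosed.preimage
      ((((continuous_apply i).comp hval).comp continuous_fst).prodMk
        (((continuous_apply i).comp hval).comp continuous_snd))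
      (isClosed_discrete _)
  set A : Set (GeodesicRays (wordDist S)) := {c | c.1 0 = 1} with hAdef
  have hC : IsCompact ((A ×ˢ A) \ W) := (hA.prod hA).diff hW
  have hcov : (A ×ˢ A) \ W ⊆ ⋃ l, (E l)ᶜ := by
    rintro ⟨c, c'⟩ ⟨-, hpW⟩
    by_contra hcon
    simp only [Set.mem_iUnion, Set.mem_compl_iff, not_exists, not_not] at hcon
    have hastep : ∀ i, wordDist S (c.1 i) (c'.1 i) ≤ 2 * δ := fun i => hcon i i le_rfl
    have hasym : Asymptotic (wordDist S) c.1 c'.1 :=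
      ⟨2 * δ, fun t => ⟨t, hastep t⟩, fun s => ⟨s, by
        rw [wd_symm hS.2.1]; exact hastep s⟩⟩
    have heq : q c = q c' := Quot.sound hasym
    have hmemU : q c ∈ ⋃ i, U i := hcover ▸ Set.mem_univ _
    obtain ⟨i, hi⟩ := Set.mem_iUnion.mp hmemU
    have h2 : c' ∈ V i := by
      show q c' ∈ U i
      rw [← heq]
      exact hi
    exact hpW (Set.mem_iUnion.mpr ⟨i, Set.mem_prod.mpr ⟨hi, h2⟩⟩)
  have hdir : Directed (· ⊆ ·) (fun l => (E l)ᶜ) := by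
    intro a b
    refine ⟨max a b, Set.compl_subset_compl.mpr fun p hp i hi => ?_,
      Set.compl_subset_compl.mpr fun p hp i hi => ?_⟩
    · exact hp i (hi.trans (le_max_left a b))
    · exact hp i (hi.trans (le_max_right a b))
  obtain ⟨l, hl⟩ := hC.elim_directed_cover (fun l => (E l)ᶜ)
    (fun l => (hE l).isOpen_compl) hcov hdir
  refine ⟨l, fun m m' hmm' => ?_⟩
  have hp : ((⟨dsgRay m.1 1, m.2.2.1 1⟩ : GeodesicRays (wordDist S)),
      (⟨dsgRay m'.1 1, m'.2.2.1 1⟩ : GeodesicRays (wordDist S))) ∈ W := by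
    by_contra hpW
    refine hl ⟨Set.mem_prod.mpr ⟨?_, ?_⟩, hpW⟩ hmm'
    · show dsgRay m.1 1 0 = 1
      rfl
    · show dsgRay m'.1 1 0 = 1
      rfl
  obtain ⟨i, hi⟩ := Set.mem_iUnion.mp hp
  exact ⟨i, hi.1, hi.2⟩
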